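/- arXiv:2211.09416 — 3 statements merged into one kernel-verified Lean document; each statement's English description precedes it below -/
import Mathlib

section
/- The amoeba of a Laurent polynomial is a closed subset of ℝ^n. -/
open Real

/-- Evaluation of the Laurent polynomial with support `A` and coefficients `c`
at a point `z ∈ (ℂ*)ⁿ`. -/
noncomputable def evalL (n : ℕ) (A : Finset (Fin n → ℤ)) (c : (Fin n → ℤ) → ℂ)
    (z : Fin n → ℂ) : ℂ :=
  ∑ α ∈ A, c α * ∏ j, z j ^ α j

/-- The amoeba of a function on the complex torus: the image under
`Log (z₁,…,zₙ) = (ln|z₁|,…,ln|zₙ|)` of its zero locus in `(ℂ*)ⁿ`. -/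
def amoebaOf (n : ℕ) (f : (Fin n → ℂ) → ℂ) : Set (Fin n → ℝ) :=
  {x | ∃ z : Fin n → ℂ, (∀ j, z j ≠ 0) ∧ f z = 0 ∧
        ∀ j, Real.log ‖z j‖ = x j}

/-- The amoeba of a Laurent polynomial (not identically zero on the torus)
is a closed subset of ℝⁿ. -/
theorem amoeba_isClosed (n : ℕ) (A : Finset (Fin n → ℤ)) (c : (Fin n → ℤ) → ℂ)
    (hnz : ∃ z : Fin n → ℂ, (∀ j, z j ≠ 0) ∧ evalL n A c z ≠ 0) :
    IsClosed (amoebaOf n (evalL n A c)) := by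
  clear hnz
  apply IsSeqClosed.isClosed
  intro x x0 hx hlim
  choose z hz hfz hlog using hx
  -- coordinatewise convergence
  have hcoord : ∀ j, Filter.Tendsto (fun k => x k j) Filter.atTop (nhds (x0 j)) := by
    intro j
    exact (tendsto_pi_nhds.mp hlim) j
  -- abs of witnesses
  have habs : ∀ k j, ‖z k j‖ = Real.exp (x k j) := by
    intro k j
    rw [← hlog k j, Real.exp_log]
    exact norm_pos_iff.mpr (hz k j)
  -- eventually all coordinates are within 1 of the limit
  have hev : ∀ᶠ k in Filter.atTop, ∀ j, |x k j - x0 j| ≤ 1 := by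
    rw [Filter.eventually_all]
    intro j
    have := (hcoord j).sub_const (x0 j)
    have h2 := this.abs
    simpa using h2.eventually_le_const (by norm_num : |x0 j - x0 j| < 1)
  obtain ⟨N, hN⟩ := Filter.eventually_atTop.mp hev
  -- compact annulus
  set K : Set (Fin n → ℂ) := Set.pi Set.univ
    (fun j => {w : ℂ | ‖w‖ ∈ Set.Icc (Real.exp (x0 j - 1)) (Real.exp (x0 j + 1))})
    with hK
  have hKcomp : IsCompact K := by
    apply isCompact_univ_pi
    intro j
    apply IsCompact.of_isClosed_subset (isCompact_closedBall (0 : ℂ) (Real.exp (x0 j + 1)))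
    · exact (isClosed_Icc.preimage continuous_norm)
    · intro w hw
      simp only [Metric.mem_closedBall, Complex.dist_eq, sub_zero]
      exact hw.2
  set u : ℕ → Fin n → ℂ := fun k => z (k + N) with hu
  have huK : ∀ k, u k ∈ K := by
    intro k
    intro j _
    have hb := hN (k + N) (Nat.le_add_left N k) j
    have := abs_le.mp hb
    constructor
    · rw [habs]
      exact Real.exp_le_exp.mpr (by linarith [this.1])
    · rw [habs]
      exact Real.exp_le_exp.mpr (by linarith [this.2])
  obtain ⟨w, hwK, φ, hφ, hconv⟩ := hKcomp.tendsto_subseq huK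
  have hφN : Filter.Tendsto (fun k => φ k + N) Filter.atTop Filter.atTop :=
    Filter.tendsto_atTop_mono (fun k => Nat.le_add_right (φ k) N) hφ.tendsto_atTop
  have htend : ∀ j, Filter.Tendsto (fun k => u (φ k) j) Filter.atTop (nhds (w j)) := by
    intro j
    exact ((continuous_apply j).continuousAt.tendsto).comp hconv
  -- |w j| = exp (x0 j)
  have hwabs : ∀ j, ‖w j‖ = Real.exp (x0 j) := by
    intro j
    have h1 : Filter.Tendsto (fun k => ‖u (φ k) j‖) Filter.atTop
        (nhds (‖w j‖)) :=
      (continuous_norm.continuousAt.tendsto).comp (htend j)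
    have h2 : Filter.Tendsto (fun k => ‖u (φ k) j‖) Filter.atTop
        (nhds (Real.exp (x0 j))) := by
      have : (fun k => ‖u (φ k) j‖) = fun k => Real.exp (x (φ k + N) j) := by
        funext k; exact habs _ _
      rw [this]
      exact (Real.continuous_exp.continuousAt.tendsto).comp ((hcoord j).comp hφN)
    exact tendsto_nhds_unique h1 h2
  have hwne : ∀ j, w j ≠ 0 := by
    intro j h
    have := hwabs j
    rw [h] at this
    simp at this
    exact (Real.exp_pos (x0 j)).ne this
  -- evalL continuous along the subsequence
  have hev2 : Filter.Tendsto (fun k => evalL n A c (u (φ k))) Filter.atTop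
      (nhds (evalL n A c w)) := by
    unfold evalL
    apply tendsto_finset_sum
    intro α _
    apply Filter.Tendsto.const_mul
    apply tendsto_finset_prod
    intro j _
    exact ((continuousAt_zpow₀ (w j) (α j) (Or.inl (hwne j))).tendsto).comp (htend j)
  have hzero : evalL n A c w = 0 := by
    have h0 : Filter.Tendsto (fun k => evalL n A c (u (φ k))) Filter.atTop (nhds 0) := by
      have : (fun k => evalL n A c (u (φ k))) = fun _ => (0 : ℂ) := by
        funext k; exact hfz (φ k + N)
      rw [this]; exact tendsto_const_nhds
    exact tendsto_nhds_unique hev2 h0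
  exact ⟨w, hwne, hzero, fun j => by rw [hwabs j, Real.log_exp]⟩
end

section
/- Every connected component of the complement of the amoeba of a Laurent polynomial is an open convex subset of ℝ^n. -/
open Real

open Polynomial Filter Topology

noncomputable def cntIn (P : Polynomial ℂ) (R : ℝ) : ℕ :=
  Multiset.card (P.roots.filter (fun ρ => ‖ρ‖ < R))

open Polynomial

/-- A function that is locally constant at each point of a preconnected set is constant on it. -/
lemma constOn_of_locallyConst {X : Type*} [TopologicalSpace X] {s : Set X}
    (hs : IsPreconnected s) {g : X → ℕ}
    (h : ∀ p ∈ s, ∀ᶠ q in nhds p, g q = g p) {a b : X} (ha : a ∈ s) (hb : b ∈ s) :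
    g a = g b := by
  by_contra hne
  set U : Set X := {q | ∀ᶠ q' in nhds q, g q' = g b} with hU
  set V : Set X := {q | ∃ v, v ≠ g b ∧ ∀ᶠ q' in nhds q, g q' = v} with hV
  have hUopen : IsOpen U := by
    rw [isOpen_iff_mem_nhds]
    intro q hq
    rcases eventually_nhds_iff.1 hq with ⟨t, htg, hto, hqt⟩
    exact Filter.mem_of_superset (hto.mem_nhds hqt)
      (fun q' hq' => eventually_nhds_iff.2 ⟨t, htg, hto, hq'⟩)
  have hVopen : IsOpen V := by
    rw [isOpen_iff_mem_nhds]
    intro q ⟨v, hv, hq⟩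
    rcases eventually_nhds_iff.1 hq with ⟨t, htg, hto, hqt⟩
    exact Filter.mem_of_superset (hto.mem_nhds hqt)
      (fun q' hq' => ⟨v, hv, eventually_nhds_iff.2 ⟨t, htg, hto, hq'⟩⟩)
  have hcover : s ⊆ U ∪ V := by
    intro p hp
    by_cases hpb : g p = g b
    · exact Or.inl (by simpa [hU, hpb] using h p hp)
    · exact Or.inr ⟨g p, hpb, h p hp⟩
  have hsb : (s ∩ U).Nonempty := ⟨b, hb, h b hb⟩
  have hsa : (s ∩ V).Nonempty := ⟨a, ha, g a, hne, h a ha⟩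
  rcases hs U V hUopen hVopen hcover hsb hsa with ⟨p, _, hpU, hpV⟩
  rcases hpV with ⟨v, hv, hpv⟩
  exact hv (((hpv.and hpU).self_of_nhds).1.symm.trans ((hpv.and hpU).self_of_nhds).2)

/-- Roots of `P.comp (C b * X)` are the roots of `P` divided by `b`. -/
lemma roots_comp_C_mul_X (P : ℂ[X]) (hP : P ≠ 0) {b : ℂ} (hb : b ≠ 0) :
    (P.comp (C b * X)).roots = P.roots.map (fun ρ => b⁻¹ * ρ) := by
  have hsp : Splits P := IsAlgClosed.splits P
  have hfact := hsp.eq_prod_roots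
  have hcomp : P.comp (C b * X)
      = C (P.leadingCoeff * b ^ Multiset.card P.roots) *
        (Multiset.map (fun a => X - C a) (P.roots.map fun ρ => b⁻¹ * ρ)).prod := by
    conv_lhs => rw [hfact]
    rw [mul_comp, C_comp, multiset_prod_comp]
    rw [Multiset.map_map, Multiset.map_map]
    have : ∀ ρ : ℂ, ((fun p => p.comp (C b * X)) ∘ fun a => X - C a) ρ
        = C b * ((fun a => X - C a) ∘ fun ρ => b⁻¹ * ρ) ρ := by
      intro ρ
      simp only [Function.comp_apply, sub_comp, X_comp, C_comp]
      rw [mul_sub, ← C_mul, mul_inv_cancel_left₀ hb]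
    rw [Multiset.map_congr rfl (fun ρ _ => this ρ), Multiset.prod_map_mul]
    simp only [Multiset.map_const', Multiset.prod_replicate, Multiset.card_map]
    rw [C_mul, C_pow]
    rw [mul_assoc]
  rw [hcomp, roots_C_mul, roots_multiset_prod_X_sub_C]
  exact mul_ne_zero (leadingCoeff_ne_zero.2 hP) (pow_ne_zero _ hb)





lemma listOfFnGet {α : Type*} (l : List α) {D : ℕ} (h : l.length = D) :
    List.ofFn (fun i : Fin D => l.get (Fin.cast h.symm i)) = l := by
  subst h; simp

lemma coe_ofFn {α : Type*} {D : ℕ} (f : Fin D → α) :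
    (↑(List.ofFn f) : Multiset α) = Multiset.map f Finset.univ.val := by
  rw [List.ofFn_eq_map, ← Multiset.map_coe]
  congr 1

lemma rootCount_eventually_const {Z : Type*} [MetricSpace Z] (D : ℕ) (F : Z → Polynomial ℂ)
    (hcont : ∀ i, Continuous fun z => (F z).coeff i)
    (h0 : ∀ z i, D < i → (F z).coeff i = 0)
    (hlc : ∀ z, (F z).coeff D ≠ 0)
    (z₀ : Z) (hno : ∀ ρ ∈ (F z₀).roots, ‖ρ‖ ≠ 1) :
    ∀ᶠ z in nhds z₀, cntIn (F z) 1 = cntIn (F z₀) 1 := by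
  have hFne : ∀ z, F z ≠ 0 := fun z h => hlc z (by simp [h])
  have hdeg : ∀ z, (F z).natDegree = D := fun z =>
    le_antisymm (Polynomial.natDegree_le_iff_coeff_eq_zero.2 (h0 z))
      (Polynomial.le_natDegree_of_ne_zero (hlc z))
  have hcard : ∀ z, Multiset.card (F z).roots = D := by
    intro z
    rw [← hdeg z, ← Polynomial.splits_iff_card_roots]
    exact IsAlgClosed.splits _
  by_contra hcon
  have hclos : z₀ ∈ closure {z | cntIn (F z) 1 ≠ cntIn (F z₀) 1} := by
    rw [mem_closure_iff_frequently]
    exact Filter.not_eventually.mp hcon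
  obtain ⟨u, hu, hulim⟩ := mem_closure_iff_seq_limit.1 hclos
  -- bound on the roots
  set B : Z → ℝ := fun z =>
    max 1 ((∑ i ∈ Finset.range (D+1), ‖(F z).coeff i‖) / ‖(F z).coeff D‖)
    with hB
  have habs : ∀ z, 0 < ‖(F z).coeff D‖ :=
    fun z => (norm_pos_iff).2 (hlc z)
  have hroot_bound : ∀ z, ∀ ρ ∈ (F z).roots, ‖ρ‖ ≤ B z := by
    intro z ρ hρ
    have hev : Polynomial.eval ρ (F z) = 0 := (Polynomial.mem_roots (hFne z)).1 hρ
    rcases le_or_gt (‖ρ‖) 1 with h1 | h1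
    · exact h1.trans (le_max_left _ _)
    rcases Nat.eq_zero_or_pos D with hD0 | hDpos
    · exfalso
      have := hcard z
      rw [hD0, Multiset.card_eq_zero] at this
      rw [this] at hρ
      exact Multiset.notMem_zero ρ hρ
    -- D ≥ 1
    have heval : Polynomial.eval ρ (F z)
        = ∑ i ∈ Finset.range (D+1), (F z).coeff i * ρ ^ i :=
      Polynomial.eval_eq_sum_range' (by rw [hdeg z]; omega) ρ
    have hsplit : (F z).coeff D * ρ ^ D = -∑ i ∈ Finset.range D, (F z).coeff i * ρ ^ i := by
      have := heval.symm.trans hev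
      rw [Finset.sum_range_succ] at this
      exact eq_neg_of_add_eq_zero_right this
    have key : ‖(F z).coeff D‖ * ‖ρ‖ ^ D
        ≤ (∑ i ∈ Finset.range (D+1), ‖(F z).coeff i‖) * ‖ρ‖ ^ (D-1) := by
      calc ‖(F z).coeff D‖ * ‖ρ‖ ^ D
          = ‖(F z).coeff D * ρ ^ D‖ := by rw [norm_mul, norm_pow]
        _ = ‖∑ i ∈ Finset.range D, (F z).coeff i * ρ ^ i‖ := by rw [hsplit, norm_neg]
        _ ≤ ∑ i ∈ Finset.range D, ‖(F z).coeff i * ρ ^ i‖ := by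
            exact norm_sum_le _ _
        _ ≤ ∑ i ∈ Finset.range D, ‖(F z).coeff i‖ * ‖ρ‖ ^ (D-1) := by
            apply Finset.sum_le_sum
            intro i hi
            rw [norm_mul, norm_pow]
            apply mul_le_mul_of_nonneg_left _ (norm_nonneg _)
            have := Finset.mem_range.1 hi
            exact pow_le_pow_right₀ (le_of_lt h1) (by omega)
        _ = (∑ i ∈ Finset.range D, ‖(F z).coeff i‖) * ‖ρ‖ ^ (D-1) := by
            rw [Finset.sum_mul]
        _ ≤ (∑ i ∈ Finset.range (D+1), ‖(F z).coeff i‖) * ‖ρ‖ ^ (D-1) := by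
            apply mul_le_mul_of_nonneg_right _ (pow_nonneg (norm_nonneg _) _)
            rw [Finset.sum_range_succ]
            exact le_add_of_nonneg_right (norm_nonneg _)
    have hpow : ‖ρ‖ ^ D = ‖ρ‖ ^ (D-1) * ‖ρ‖ := by
      rw [← pow_succ]
      congr 1
      omega
    have hpos : (0:ℝ) < ‖ρ‖ ^ (D-1) := pow_pos (lt_trans one_pos h1) _
    have key2 : ‖(F z).coeff D‖ * ‖ρ‖
        ≤ ∑ i ∈ Finset.range (D+1), ‖(F z).coeff i‖ := by
      have := key
      rw [hpow] at this
      have h3 : (‖(F z).coeff D‖ * ‖ρ‖) * ‖ρ‖ ^ (D-1)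
          ≤ (∑ i ∈ Finset.range (D+1), ‖(F z).coeff i‖) * ‖ρ‖ ^ (D-1) := by
        ring_nf
        ring_nf at this
        linarith [this]
      exact le_of_mul_le_mul_right h3 hpos
    have : ‖ρ‖ ≤ (∑ i ∈ Finset.range (D+1), ‖(F z).coeff i‖) / ‖(F z).coeff D‖ := by
      rw [le_div_iff₀ (habs z)]
      linarith [key2]
    exact this.trans (le_max_right _ _)
  -- continue: eventual bound
  have hBcont : Continuous B := by
    apply continuous_const.max
    apply Continuous.div
    · exact continuous_finset_sum _ (fun i _ => continuous_norm.comp (hcont i))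
    · exact continuous_norm.comp (hcont D)
    · exact fun z => ne_of_gt (habs z)
  set R : ℝ := B z₀ + 1 with hR
  have hB1 : (1:ℝ) ≤ B z₀ := le_max_left _ _
  have hRpos : (1:ℝ) ≤ R := by rw [hR]; linarith
  have hBR : ∀ᶠ k in atTop, B (u k) ≤ R :=
    (((hBcont.tendsto z₀).comp hulim).eventually_lt_const (lt_add_one _)).mono
      (fun k hk => le_of_lt hk)
  obtain ⟨K₀, hK₀⟩ := eventually_atTop.1 hBR
  set v : ℕ → Z := fun k => u (k + K₀) with hv
  have hvlim : Tendsto v atTop (𝓝 z₀) :=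
    hulim.comp (tendsto_atTop_mono (fun k => Nat.le_add_right k K₀) (tendsto_id (α := ℕ)))
  have hvbad : ∀ k, cntIn (F (v k)) 1 ≠ cntIn (F z₀) 1 := fun k => hu (k + K₀)
  have hvR : ∀ k, ∀ ρ ∈ (F (v k)).roots, ‖ρ‖ ≤ R :=
    fun k ρ hρ => (hroot_bound _ ρ hρ).trans (hK₀ (k + K₀) (Nat.le_add_left _ _))
  -- root lists
  have hlen : ∀ k, ((F (v k)).roots).toList.length = D := by
    intro k; rw [Multiset.length_toList, hcard]
  set L : ℕ → Fin D → ℂ := fun k i => ((F (v k)).roots).toList.get (Fin.cast (hlen k).symm i)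
    with hL
  have hLmem : ∀ k i, L k i ∈ (F (v k)).roots :=
    fun k i => Multiset.mem_toList.1 (by apply List.get_mem)
  have hroots_eq : ∀ k, (F (v k)).roots = Multiset.map (L k) Finset.univ.val := by
    intro k
    rw [← coe_ofFn (L k), hL]
    rw [listOfFnGet _ (hlen k)]
    exact (Multiset.coe_toList _).symm
  -- compactness
  have hLS : ∀ k, L k ∈ Metric.closedBall (0 : Fin D → ℂ) R := by
    intro k
    rw [Metric.mem_closedBall, dist_pi_le_iff (by linarith)]
    intro i
    rw [Pi.zero_apply, dist_zero_right]
    exact hvR k _ (hLmem k i)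
  obtain ⟨Lim, hLimS, φ, hφmono, hφlim⟩ :=
    (isCompact_closedBall (0 : Fin D → ℂ) R).tendsto_subseq hLS
  have hptlim : ∀ i, Tendsto (fun k => L (φ k) i) atTop (𝓝 (Lim i)) := by
    intro i
    exact (tendsto_pi_nhds.1 hφlim) i
  -- factorized identity
  have hfact : ∀ k (x : ℂ), Polynomial.eval x (F (v k))
      = (F (v k)).coeff D * ∏ i : Fin D, (x - L k i) := by
    intro k x
    conv_lhs => rw [(IsAlgClosed.splits (F (v k))).eq_prod_roots]
    rw [Polynomial.leadingCoeff, hdeg, hroots_eq k, Multiset.map_map]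
    rw [Polynomial.eval_mul, Polynomial.eval_C]
    congr 1
    rw [← Finset.prod_eq_multiset_prod]
    rw [Polynomial.eval_prod]
    simp
  -- eval as polynomial in coefficients (continuity in z)
  have heval_sum : ∀ z (x : ℂ), Polynomial.eval x (F z)
      = ∑ i ∈ Finset.range (D+1), (F z).coeff i * x ^ i := fun z x =>
    Polynomial.eval_eq_sum_range' (by rw [hdeg z]; omega) x
  -- limit identity
  set lc : ℂ := (F z₀).coeff D with hlc0
  have hfz₀ : F z₀ = Polynomial.C lc * ∏ i : Fin D, (Polynomial.X - Polynomial.C (Lim i)) := by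
    apply Polynomial.funext
    intro x
    have hT1 : Tendsto (fun k => Polynomial.eval x (F (v (φ k)))) atTop
        (𝓝 (Polynomial.eval x (F z₀))) := by
      simp only [heval_sum]
      apply tendsto_finset_sum
      intro i _
      exact (((hcont i).tendsto z₀).comp (hvlim.comp hφmono.tendsto_atTop)).mul tendsto_const_nhds
    have hT2 : Tendsto (fun k => Polynomial.eval x (F (v (φ k)))) atTop
        (𝓝 (lc * ∏ i : Fin D, (x - Lim i))) := by
      have : ∀ k, Polynomial.eval x (F (v (φ k)))
          = (F (v (φ k))).coeff D * ∏ i : Fin D, (x - L (φ k) i) := fun k => hfact (φ k) x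
      rw [funext this]
      apply Tendsto.mul
      · exact ((hcont D).tendsto z₀).comp (hvlim.comp hφmono.tendsto_atTop)
      · apply tendsto_finset_prod
        intro i _
        exact tendsto_const_nhds.sub (hptlim i)
    rw [tendsto_nhds_unique hT1 hT2]
    rw [Polynomial.eval_mul, Polynomial.eval_C, Polynomial.eval_prod]
    simp
  have hroots₀ : (F z₀).roots = Multiset.map Lim Finset.univ.val := by
    rw [hfz₀, Polynomial.roots_C_mul _ (by rw [← hlc0] at *; exact hlc z₀)]
    rw [Finset.prod_eq_multiset_prod]
    rw [show (Multiset.map (fun i => Polynomial.X - Polynomial.C (Lim i)) Finset.univ.val)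
        = Multiset.map (fun a => Polynomial.X - Polynomial.C a) (Multiset.map Lim Finset.univ.val)
        from by rw [Multiset.map_map]; rfl]
    exact Polynomial.roots_multiset_prod_X_sub_C _
  have hLimne : ∀ i, ‖Lim i‖ ≠ 1 := by
    intro i
    apply hno
    rw [hroots₀]
    exact Multiset.mem_map_of_mem _ (by simp)
  -- counts via filters over Fin D
  have hcnt : ∀ (f : Fin D → ℂ) (P : Polynomial ℂ), P.roots = Multiset.map f Finset.univ.val →
      cntIn P 1 = Multiset.card
        (Multiset.filter (fun i => ‖f i‖ < 1) Finset.univ.val) := by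
    intro f P hPf
    rw [cntIn, hPf, Multiset.filter_map, Multiset.card_map]
    rfl
  have hev_iff : ∀ᶠ k in atTop, ∀ i,
      (‖L (φ k) i‖ < 1 ↔ ‖Lim i‖ < 1) := by
    rw [Filter.eventually_all]
    intro i
    have htd : Tendsto (fun k => ‖L (φ k) i‖) atTop (𝓝 (‖Lim i‖)) :=
      (continuous_norm.tendsto (Lim i)).comp (hptlim i)
    rcases lt_or_gt_of_ne (hLimne i) with hlt | hgt
    · exact (htd.eventually_lt_const hlt).mono (fun k hk => iff_of_true hk hlt)
    · exact (htd.eventually_const_lt hgt).mono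
        (fun k hk => iff_of_false (not_lt.2 hk.le) (not_lt.2 hgt.le))
  have hfinal : ∀ᶠ k in atTop, cntIn (F (v (φ k))) 1 = cntIn (F z₀) 1 := by
    filter_upwards [hev_iff] with k hk
    rw [hcnt (L (φ k)) _ (hroots_eq (φ k)), hcnt Lim _ hroots₀]
    congr 1
    exact Multiset.filter_congr (fun i _ => hk i)
  rcases hfinal.exists with ⟨k, hk⟩
  exact hvbad (φ k) hk

open Filter Topology

lemma dense_open_biInter {ι X : Type*} [TopologicalSpace X] (P : Finset ι) (S : ι → Set X)
    (h : ∀ i ∈ P, IsOpen (S i) ∧ Dense (S i)) :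
    IsOpen (⋂ i ∈ P, S i) ∧ Dense (⋂ i ∈ P, S i) := by
  classical
  induction P using Finset.induction_on with
  | empty => simpa using ⟨isOpen_univ, dense_univ⟩
  | @insert a s hna ih =>
    rw [Finset.set_biInter_insert]
    have h1 := h a (Finset.mem_insert_self a s)
    have h2 := ih (fun i hi => h i (Finset.mem_insert_of_mem hi))
    exact ⟨h1.1.inter h2.1, h1.2.inter_of_isOpen_left h2.2 h1.1⟩

lemma dense_linform_ne {n : ℕ} (d : Fin n → ℤ) (hd : d ≠ 0) :
    IsOpen {ρ : Fin n → ℝ | (∑ j, (d j : ℝ) * ρ j) ≠ 0}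
      ∧ Dense {ρ : Fin n → ℝ | (∑ j, (d j : ℝ) * ρ j) ≠ 0} := by
  have hL : Continuous (fun ρ : Fin n → ℝ => ∑ j, (d j : ℝ) * ρ j) :=
    continuous_finset_sum _ (fun j _ => continuous_const.mul (continuous_apply j))
  obtain ⟨j₀, hj₀⟩ := Function.ne_iff.1 hd
  have hdj₀ : ((d j₀ : ℤ) : ℝ) ≠ 0 := by exact_mod_cast hj₀
  constructor
  · exact isOpen_compl_singleton.preimage hL
  · rw [Metric.dense_iff]
    intro w ε hε
    by_cases hw : (∑ j, (d j : ℝ) * w j) ≠ 0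
    · exact ⟨w, Metric.mem_ball_self hε, hw⟩
    push_neg at hw
    set τ : ℝ := ε / 2 with hτ
    set w' : Fin n → ℝ := Function.update w j₀ (w j₀ + τ) with hw'
    refine ⟨w', ?_, ?_⟩
    · rw [Metric.mem_ball]
      have : dist w' w ≤ τ := by
        rw [dist_pi_le_iff (by positivity)]
        intro b
        by_cases hb : b = j₀
        · subst hb
          rw [hw', Function.update_self, Real.dist_eq]
          simp [abs_of_nonneg (by positivity : (0:ℝ) ≤ τ)]
        · rw [hw', Function.update_of_ne hb]
          simp [dist_self]
          positivity
      linarith [this, half_lt_self hε]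
    · show (∑ j, (d j : ℝ) * w' j) ≠ 0
      have hsum : (∑ j, (d j : ℝ) * w' j) = (∑ j, (d j : ℝ) * w j) + (d j₀ : ℝ) * τ := by
        rw [Finset.sum_eq_add_sum_sdiff_singleton_of_mem (Finset.mem_univ j₀)
            (fun j => (d j : ℝ) * w' j),
          Finset.sum_eq_add_sum_sdiff_singleton_of_mem (Finset.mem_univ j₀)
            (fun j => (d j : ℝ) * w j)]
        have h1 : w' j₀ = w j₀ + τ := by rw [hw', Function.update_self]
        have h2 : ∀ j ∈ Finset.univ \ {j₀}, (d j : ℝ) * w' j = (d j : ℝ) * w j := by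
          intro j hj
          rcases Finset.mem_sdiff.1 hj with ⟨-, hj2⟩
          rw [hw', Function.update_of_ne (by simpa using hj2)]
        rw [Finset.sum_congr rfl h2, h1]
        ring
      rw [hsum, hw, zero_add]
      exact mul_ne_zero hdj₀ (by positivity)

lemma good_direction {n : ℕ} (A' : Finset (Fin n → ℤ)) (v : Fin n → ℝ) {δ : ℝ} (hδ : 0 < δ) :
    ∃ (N : ℕ) (r : Fin n → ℤ), 0 < N ∧
      dist (fun j => (r j : ℝ) / (N:ℝ)) v < δ ∧
      (∀ α ∈ A', ∀ β ∈ A', (∑ j, α j * r j) = (∑ j, β j * r j) → α = β) := by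
  classical
  set P : Finset ((Fin n → ℤ) × (Fin n → ℤ)) := (A' ×ˢ A').filter (fun p => p.1 ≠ p.2) with hP
  set S : ((Fin n → ℤ) × (Fin n → ℤ)) → Set (Fin n → ℝ) :=
    fun p => {ρ | (∑ j, ((p.1 j - p.2 j : ℤ) : ℝ) * ρ j) ≠ 0} with hS
  have hOD : IsOpen (⋂ p ∈ P, S p) ∧ Dense (⋂ p ∈ P, S p) := by
    apply dense_open_biInter
    intro p hp
    have hne : (fun j => p.1 j - p.2 j) ≠ (0 : Fin n → ℤ) := by
      intro h
      apply (Finset.mem_filter.1 hp).2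
      funext j
      have := congrFun h j
      simpa [sub_eq_zero] using this
    exact dense_linform_ne _ hne
  set W : Set (Fin n → ℝ) := Metric.ball v δ ∩ ⋂ p ∈ P, S p with hW
  have hWopen : IsOpen W := Metric.isOpen_ball.inter hOD.1
  have hWne : W.Nonempty := hOD.2.inter_open_nonempty _ Metric.isOpen_ball
    (Metric.nonempty_ball.2 hδ)
  obtain ⟨ρ, hρ⟩ := hWne
  obtain ⟨η, hη, hball⟩ := Metric.isOpen_iff.1 hWopen ρ hρ
  obtain ⟨N, hN⟩ := exists_nat_gt (1/η)
  have hN0 : (0:ℝ) < N := lt_trans (by positivity) hN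
  have hNinv : 1/(N:ℝ) < η := by
    rw [div_lt_iff₀ hN0]
    have := (div_lt_iff₀ hη).1 hN
    linarith
  set r : Fin n → ℤ := fun j => ⌈ρ j * N⌉ with hr
  set q : Fin n → ℝ := fun j => (r j : ℝ) / N with hq
  have hqρ : dist q ρ < η := by
    rw [dist_pi_lt_iff hη]
    intro b
    rw [Real.dist_eq]
    have h1 : (r b : ℝ) - ρ b * N < 1 := by
      have := Int.ceil_lt_add_one (ρ b * N)
      rw [hr]
      linarith
    have h2 : (0:ℝ) ≤ (r b : ℝ) - ρ b * N := by
      have := Int.le_ceil (ρ b * N)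
      rw [hr]
      linarith
    have h3 : q b - ρ b = ((r b : ℝ) - ρ b * N) / N := by
      rw [hq]
      field_simp
    rw [h3, abs_of_nonneg (by positivity)]
    calc ((r b : ℝ) - ρ b * N) / N < 1 / N := by
          gcongr
      _ < η := hNinv
  have hqW : q ∈ W := hball (Metric.mem_ball.2 hqρ)
  refine ⟨N, r, by exact_mod_cast hN0, ?_, ?_⟩
  · exact Metric.mem_ball.1 hqW.1
  · intro α hα β hβ hsum
    by_contra hne
    have hpair : (α, β) ∈ P := Finset.mem_filter.2 ⟨Finset.mem_product.2 ⟨hα, hβ⟩, hne⟩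
    have hqS : q ∈ S (α, β) := Set.mem_iInter₂.1 hqW.2 (α, β) hpair
    apply hqS
    show (∑ j, ((α j - β j : ℤ) : ℝ) * q j) = 0
    have hterm : ∀ j, ((α j - β j : ℤ) : ℝ) * q j = (((α j - β j) * r j : ℤ) : ℝ) / N := by
      intro j
      rw [hq]
      push_cast
      ring
    rw [Finset.sum_congr rfl (fun j _ => hterm j), ← Finset.sum_div]
    rw [← Int.cast_sum]
    have : (∑ j, (α j - β j) * r j) = (∑ j, α j * r j) - (∑ j, β j * r j) := by
      rw [← Finset.sum_sub_distrib]
      apply Finset.sum_congr rfl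
      intro j _
      ring
    rw [this, hsum, sub_self, Int.cast_zero, zero_div]

lemma zpow_finset_sum {ι : Type*} (s : Finset ι) (k : ι → ℤ) (T : ℂ) (hT : T ≠ 0) :
    ∏ j ∈ s, T ^ k j = T ^ (∑ j ∈ s, k j) := by
  induction s using Finset.cons_induction with
  | empty => simp
  | cons a s ha ih =>
    rw [Finset.prod_cons, Finset.sum_cons, zpow_add₀ hT, ih]

theorem key_segment (n : ℕ) (A : Finset (Fin n → ℤ)) (c : (Fin n → ℤ) → ℂ)
    (x : Fin n → ℝ) (hx : x ∈ (amoebaOf n (evalL n A c))ᶜ)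
    (r : Fin n → ℤ)
    (hinj : ∀ α ∈ A, c α ≠ 0 → ∀ β ∈ A, c β ≠ 0 →
      (∑ j, α j * r j) = (∑ j, β j * r j) → α = β)
    (a : Fin n → ℝ) (ha : a ∈ connectedComponentIn (amoebaOf n (evalL n A c))ᶜ x)
    (s₀ : ℝ)
    (hb : (fun j => a j + s₀ * (r j : ℝ)) ∈ connectedComponentIn (amoebaOf n (evalL n A c))ᶜ x)
    (s : ℝ) (hs : s ∈ Set.Icc (0:ℝ) s₀) :
    (fun j => a j + s * (r j : ℝ)) ∈ (amoebaOf n (evalL n A c))ᶜ := by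
  classical
  set Ω : Set (Fin n → ℝ) := (amoebaOf n (evalL n A c))ᶜ with hΩ
  set E : Set (Fin n → ℝ) := connectedComponentIn Ω x with hE
  have hEΩ : E ⊆ Ω := connectedComponentIn_subset _ _
  by_contra hw
  have hw' : (fun j => a j + s * (r j : ℝ)) ∈ amoebaOf n (evalL n A c) := not_not.1 hw
  obtain ⟨z, hz0, hzeval, hzlog⟩ := hw'
  -- the support is nonempty
  set A' : Finset (Fin n → ℤ) := A.filter (fun α => c α ≠ 0) with hA'def
  have hA' : A'.Nonempty := by
    by_contra hemp
    rw [Finset.not_nonempty_iff_eq_empty, Finset.filter_eq_empty_iff] at hemp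
    apply hEΩ ha
    refine ⟨fun j => Complex.exp (a j), fun j => Complex.exp_ne_zero _, ?_, fun j => by
      rw [Complex.norm_exp]; simp⟩
    apply Finset.sum_eq_zero
    intro α hα
    rcases not_not.1 (hemp hα) with h
    rw [h, zero_mul]
  -- weights and the polynomial family
  set wt : (Fin n → ℤ) → ℤ := fun α => ∑ j, α j * r j with hwt
  set m : ℤ := A'.inf' hA' wt with hm
  set Dd : ℕ := (A'.sup' hA' wt - m).toNat with hDd
  set ee : (Fin n → ℤ) → ℕ := fun α => (wt α - m).toNat with hee
  set coefF : (Fin n → ℝ) × (Fin n → ℝ) → (Fin n → ℤ) → ℂ :=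
    fun p α => c α * Complex.exp (∑ j, (α j : ℂ) * ((p.1 j : ℂ) + (p.2 j : ℂ) * Complex.I))
    with hcoefF
  set F : (Fin n → ℝ) × (Fin n → ℝ) → Polynomial ℂ :=
    fun p => ∑ α ∈ A', Polynomial.C (coefF p α) * Polynomial.X ^ (ee α) with hF
  have hwtm : ∀ α ∈ A', m ≤ wt α := fun α hα => Finset.inf'_le wt hα
  have heewt : ∀ α ∈ A', (ee α : ℤ) = wt α - m := fun α hα =>
    Int.toNat_of_nonneg (by linarith [hwtm α hα])
  have hee_le : ∀ α ∈ A', ee α ≤ Dd := fun α hα =>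
    Int.toNat_le_toNat (by linarith [Finset.le_sup' wt hα])
  have hee_inj : ∀ α ∈ A', ∀ β ∈ A', ee α = ee β → α = β := by
    intro α hα β hβ h
    have h1 : wt α = wt β := by
      have e1 := heewt α hα
      have e2 := heewt β hβ
      rw [h] at e1
      omega
    rcases Finset.mem_filter.1 hα with ⟨hαA, hαc⟩
    rcases Finset.mem_filter.1 hβ with ⟨hβA, hβc⟩
    exact hinj α hαA hαc β hβA hβc h1
  -- coefficient formula
  have hcoeff : ∀ p i, (F p).coeff i = ∑ α ∈ A'.filter (fun α => ee α = i), coefF p α := by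
    intro p i
    rw [hF]
    rw [Polynomial.finset_sum_coeff]
    conv_rhs => rw [Finset.sum_filter]
    apply Finset.sum_congr rfl
    intro α hα
    rw [Polynomial.coeff_C_mul, Polynomial.coeff_X_pow]
    by_cases h : ee α = i
    · simp [h]
    · simp [h, Ne.symm h]
  -- continuity of coefficients
  have hcont : ∀ i, Continuous fun p => (F p).coeff i := by
    intro i
    simp only [hcoeff]
    apply continuous_finset_sum
    intro α _
    apply Continuous.mul continuous_const
    apply Complex.continuous_exp.comp
    apply continuous_finset_sum
    intro j _
    apply Continuous.mul continuous_const
    exact (Complex.continuous_ofReal.comp ((continuous_apply j).comp continuous_fst)).add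
      ((Complex.continuous_ofReal.comp ((continuous_apply j).comp continuous_snd)).mul
        continuous_const)
  -- vanishing above degree Dd
  have h0 : ∀ p i, Dd < i → (F p).coeff i = 0 := by
    intro p i hi
    rw [hcoeff]
    apply Finset.sum_eq_zero
    intro α hα
    exfalso
    rcases Finset.mem_filter.1 hα with ⟨hαA', hαe⟩
    have := hee_le α hαA'
    omega
  -- leading coefficient nonzero
  obtain ⟨αmax, hαmax, hsupmax⟩ := Finset.exists_mem_eq_sup' hA' wt
  have heemax : ee αmax = Dd := by rw [hee, hDd, hsupmax]
  have hfiltmax : A'.filter (fun α => ee α = Dd) = {αmax} := by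
    apply Finset.eq_singleton_iff_unique_mem.2
    constructor
    · exact Finset.mem_filter.2 ⟨hαmax, heemax⟩
    · intro β hβ
      rcases Finset.mem_filter.1 hβ with ⟨hβA', hβe⟩
      exact hee_inj β hβA' αmax hαmax (hβe.trans heemax.symm)
  have hlcF : ∀ p, (F p).coeff Dd ≠ 0 := by
    intro p
    rw [hcoeff, hfiltmax, Finset.sum_singleton]
    exact mul_ne_zero (Finset.mem_filter.1 hαmax).2 (Complex.exp_ne_zero _)
  have hFne : ∀ p, F p ≠ 0 := fun p h => hlcF p (by rw [h]; simp)
  -- the evaluation relation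
  have hEV : ∀ (u θ : Fin n → ℝ) (T : ℂ), T ≠ 0 →
      evalL n A c (fun j => Complex.exp ((u j : ℂ) + (θ j : ℂ) * Complex.I) * T ^ (r j)) =
        T ^ m * Polynomial.eval T (F (u, θ)) := by
    intro u θ T hT
    rw [evalL, ← Finset.sum_filter_of_ne (p := fun α => c α ≠ 0)
      (fun α _ h hc => h (by rw [hc, zero_mul]))]
    rw [hF, Polynomial.eval_finset_sum, Finset.mul_sum]
    apply Finset.sum_congr rfl
    intro α hα
    rw [Polynomial.eval_mul, Polynomial.eval_C, Polynomial.eval_pow, Polynomial.eval_X]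
    have hsplit : ∀ j, (Complex.exp ((u j : ℂ) + (θ j : ℂ) * Complex.I) * T ^ (r j)) ^ (α j)
        = Complex.exp ((α j : ℂ) * ((u j : ℂ) + (θ j : ℂ) * Complex.I)) * (T ^ (r j * α j)) := by
      intro j
      rw [mul_zpow, ← Complex.exp_int_mul, zpow_mul]
    calc c α * ∏ j, (Complex.exp ((u j : ℂ) + (θ j : ℂ) * Complex.I) * T ^ (r j)) ^ (α j)
        = c α * (Complex.exp (∑ j, (α j : ℂ) * ((u j : ℂ) + (θ j : ℂ) * Complex.I))
            * T ^ (∑ j, r j * α j)) := by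
          rw [Finset.prod_congr rfl (fun j _ => hsplit j), Finset.prod_mul_distrib,
            Complex.exp_sum, zpow_finset_sum _ _ _ hT]
      _ = T ^ m * (coefF (u, θ) α * T ^ (ee α : ℤ)) := by
          rw [hcoefF]
          have hwtα : (∑ j, r j * α j) = m + (ee α : ℤ) := by
            have := heewt α hα
            have hcomm : (∑ j, r j * α j) = wt α := by
              rw [hwt]
              exact Finset.sum_congr rfl (fun j _ => mul_comm _ _)
            omega
          rw [hwtα, zpow_add₀ hT]
          ring
      _ = T ^ m * (coefF (u, θ) α * T ^ (ee α)) := by rw [zpow_natCast]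
  -- no roots on the unit circle over points of Ω
  have hno : ∀ (u θ : Fin n → ℝ), u ∈ Ω → ∀ ρ ∈ (F (u, θ)).roots, ‖ρ‖ ≠ 1 := by
    intro u θ hu ρ hρ habs1
    have hρ0 : ρ ≠ 0 := fun h => by simp [h] at habs1
    have hev : Polynomial.eval ρ (F (u, θ)) = 0 := (Polynomial.mem_roots (hFne _)).1 hρ
    apply hu
    refine ⟨fun j => Complex.exp ((u j : ℂ) + (θ j : ℂ) * Complex.I) * ρ ^ (r j),
      fun j => mul_ne_zero (Complex.exp_ne_zero _) (zpow_ne_zero _ hρ0), ?_, ?_⟩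
    · rw [hEV u θ ρ hρ0, hev, mul_zero]
    · intro j
      rw [norm_mul, Complex.norm_exp, norm_zpow, habs1, one_zpow, mul_one]
      simp
  -- local constancy of the root count
  set g : (Fin n → ℝ) × (Fin n → ℝ) → ℕ := fun p => cntIn (F p) 1 with hg
  have hgloc : ∀ p, p.1 ∈ Ω → ∀ᶠ q in nhds p, g q = g p := by
    intro p hp
    exact rootCount_eventually_const Dd F hcont h0 hlcF p (hno p.1 p.2 hp)
  have hEpre : IsPreconnected (E ×ˢ (Set.univ : Set (Fin n → ℝ))) :=
    (isPreconnected_connectedComponentIn).prod isPreconnected_univ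
  have hgEq : ∀ θ : Fin n → ℝ, g (a, θ) = g ((fun j => a j + s₀ * (r j : ℝ)), θ) := by
    intro θ
    exact constOn_of_locallyConst hEpre
      (fun p hp => hgloc p (hEΩ (Set.mem_prod.1 hp).1))
      (Set.mem_prod.2 ⟨ha, Set.mem_univ θ⟩) (Set.mem_prod.2 ⟨hb, Set.mem_univ θ⟩)
  -- scaling identity
  have hscale : ∀ (u θ : Fin n → ℝ) (t : ℝ),
      F ((fun j => u j + t * (r j : ℝ)), θ)
        = Complex.exp ((t : ℂ) * (m : ℂ)) •
            ((F (u, θ)).comp (Polynomial.C ((Real.exp t : ℝ) : ℂ) * Polynomial.X)) := by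
    intro u θ t
    apply Polynomial.funext
    intro y
    rw [Polynomial.smul_eq_C_mul, Polynomial.eval_mul, Polynomial.eval_C, Polynomial.eval_comp,
      Polynomial.eval_mul, Polynomial.eval_C, Polynomial.eval_X]
    rw [hF]
    rw [Polynomial.eval_finset_sum, Polynomial.eval_finset_sum, Finset.mul_sum]
    apply Finset.sum_congr rfl
    intro α hα
    rw [Polynomial.eval_mul, Polynomial.eval_C, Polynomial.eval_pow, Polynomial.eval_X,
      Polynomial.eval_mul, Polynomial.eval_C, Polynomial.eval_pow, Polynomial.eval_X]
    rw [hcoefF]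
    beta_reduce
    have hkey : Complex.exp (∑ j, (α j : ℂ) * (((u j + t * (r j : ℝ) : ℝ) : ℂ) + (θ j : ℂ) * Complex.I))
        = Complex.exp (∑ j, (α j : ℂ) * ((u j : ℂ) + (θ j : ℂ) * Complex.I))
          * Complex.exp ((t : ℂ) * (wt α : ℂ)) := by
      rw [← Complex.exp_add]
      congr 1
      rw [hwt]
      push_cast
      rw [Finset.mul_sum, ← Finset.sum_add_distrib]
      apply Finset.sum_congr rfl
      intro j _
      ring
    have hwt2 : (wt α : ℂ) = (m : ℂ) + ((ee α : ℕ) : ℂ) := by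
      have h1 := heewt α hα
      have h2 : wt α = m + (ee α : ℤ) := by omega
      exact_mod_cast congrArg (fun z : ℤ => (z : ℂ)) h2
    have hconv : Complex.exp ((t:ℂ) * (wt α:ℂ))
        = Complex.exp ((t:ℂ)*(m:ℂ)) * Complex.exp (((ee α : ℕ) : ℂ) * t) := by
      rw [← Complex.exp_add]
      congr 1
      rw [hwt2]
      ring
    have hpow : (((Real.exp t : ℝ) : ℂ) * y) ^ (ee α)
        = Complex.exp (((ee α : ℕ) : ℂ) * (t:ℂ)) * y ^ (ee α) := by
      rw [mul_pow, Complex.ofReal_exp, ← Complex.exp_nat_mul]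
    rw [hkey, hconv, hpow]
    ring
  -- root scaling
  have hroots_scale : ∀ (u θ : Fin n → ℝ) (t : ℝ),
      (F ((fun j => u j + t * (r j : ℝ)), θ)).roots
        = (F (u, θ)).roots.map (fun ρ => (((Real.exp t : ℝ) : ℂ))⁻¹ * ρ) := by
    intro u θ t
    rw [hscale u θ t, Polynomial.roots_smul_nonzero _ (Complex.exp_ne_zero _),
      roots_comp_C_mul_X _ (hFne _) (Complex.ofReal_ne_zero.2 (Real.exp_ne_zero t))]
  -- count at the far end
  have hcnt_scale : ∀ θ, g ((fun j => a j + s₀ * (r j : ℝ)), θ)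
      = Multiset.card ((F (a, θ)).roots.filter (fun ρ => ‖ρ‖ < Real.exp s₀)) := by
    intro θ
    show cntIn _ 1 = _
    rw [cntIn, hroots_scale a θ s₀, Multiset.filter_map, Multiset.card_map]
    congr 1
    apply Multiset.filter_congr
    intro ρ _
    simp only [Function.comp]
    rw [norm_mul, norm_inv, Complex.norm_real, Real.norm_eq_abs, abs_of_pos (Real.exp_pos s₀)]
    rw [inv_mul_eq_div, div_lt_one (Real.exp_pos s₀)]
  -- the root coming from the amoeba point
  set θz : Fin n → ℝ := fun j => (z j).arg with hθz
  have hzlog' : ∀ j, Real.log (‖z j‖) = a j + s * (r j : ℝ) := fun j => hzlog j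
  have hzabs : ∀ j, ‖z j‖ = Real.exp (a j + s * (r j : ℝ)) := by
    intro j
    rw [← hzlog' j]
    exact (Real.exp_log (norm_pos_iff.mpr (hz0 j))).symm
  have hzform : ∀ j, z j
      = Complex.exp ((a j : ℂ) + (θz j : ℂ) * Complex.I) * ((Real.exp s : ℝ) : ℂ) ^ (r j) := by
    intro j
    rw [← Complex.norm_mul_exp_arg_mul_I (z j), hzabs j]
    have h2 : ((Real.exp s : ℝ) : ℂ) ^ (r j : ℤ) = Complex.exp (((r j : ℤ) : ℂ) * (s : ℂ)) := by
      rw [Complex.ofReal_exp, ← Complex.exp_int_mul]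
    rw [h2, ← Complex.exp_add, Complex.ofReal_exp, ← Complex.exp_add]
    congr 1
    push_cast
    ring
  have hT0 : ((Real.exp s : ℝ) : ℂ) ≠ 0 := Complex.ofReal_ne_zero.2 (Real.exp_ne_zero s)
  have hevz : Polynomial.eval ((Real.exp s : ℝ) : ℂ) (F (a, θz)) = 0 := by
    have h1 : evalL n A c (fun j => Complex.exp ((a j : ℂ) + (θz j : ℂ) * Complex.I)
        * ((Real.exp s : ℝ) : ℂ) ^ (r j)) = 0 := by
      rw [← funext hzform]
      exact hzeval
    rw [hEV a θz _ hT0] at h1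
    rcases mul_eq_zero.1 h1 with h | h
    · exact absurd h (zpow_ne_zero _ hT0)
    · exact h
  have hTroot : ((Real.exp s : ℝ) : ℂ) ∈ (F (a, θz)).roots :=
    (Polynomial.mem_roots (hFne _)).2 hevz
  have hano : ∀ ρ ∈ (F (a, θz)).roots, ‖ρ‖ ≠ 1 := hno a θz (hEΩ ha)
  have hbno : ∀ ρ ∈ (F (a, θz)).roots, ‖ρ‖ ≠ Real.exp s₀ := by
    intro ρ hρ h1
    apply hno _ θz (hEΩ hb) ((((Real.exp s₀ : ℝ):ℂ))⁻¹ * ρ)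
    · rw [hroots_scale a θz s₀]
      exact Multiset.mem_map_of_mem _ hρ
    · rw [norm_mul, norm_inv, Complex.norm_real, Real.norm_eq_abs, abs_of_pos (Real.exp_pos s₀), h1,
        inv_mul_cancel₀ (Real.exp_ne_zero s₀)]
  have habsT : ‖((Real.exp s : ℝ) : ℂ)‖ = Real.exp s := by
    rw [Complex.norm_real, Real.norm_eq_abs, abs_of_pos (Real.exp_pos s)]
  have h1T : 1 < Real.exp s := by
    have hne := hano _ hTroot
    rw [habsT] at hne
    exact lt_of_le_of_ne (Real.one_le_exp hs.1) (Ne.symm hne)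
  have hTs₀ : Real.exp s < Real.exp s₀ := by
    have hne := hbno _ hTroot
    rw [habsT] at hne
    exact lt_of_le_of_ne (Real.exp_le_exp.2 hs.2) hne
  -- final count contradiction
  have hν := hgEq θz
  rw [hcnt_scale θz] at hν
  have hle : (F (a, θz)).roots.filter (fun ρ => ‖ρ‖ < 1)
      ≤ (F (a, θz)).roots.filter (fun ρ => ‖ρ‖ < Real.exp s₀) :=
    Multiset.monotone_filter_right _ (fun ρ h => lt_trans h (lt_trans h1T hTs₀))
  have hν' : Multiset.card ((F (a, θz)).roots.filter (fun ρ => ‖ρ‖ < 1))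
      = Multiset.card ((F (a, θz)).roots.filter (fun ρ => ‖ρ‖ < Real.exp s₀)) := hν
  have heq : (F (a, θz)).roots.filter (fun ρ => ‖ρ‖ < 1)
      = (F (a, θz)).roots.filter (fun ρ => ‖ρ‖ < Real.exp s₀) :=
    Multiset.eq_of_le_of_card_le hle (le_of_eq hν'.symm)
  have hTin : ((Real.exp s : ℝ):ℂ)
      ∈ (F (a, θz)).roots.filter (fun ρ => ‖ρ‖ < Real.exp s₀) :=
    Multiset.mem_filter.2 ⟨hTroot, by rw [habsT]; exact hTs₀⟩
  rw [← heq] at hTin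
  have hfin := (Multiset.mem_filter.1 hTin).2
  rw [habsT] at hfin
  exact absurd hfin (not_lt.2 (le_of_lt h1T))

/-- Every connected component of the complement of the amoeba of a Laurent
polynomial is an open convex subset of ℝⁿ. -/
theorem amoeba_complement_components_open_convex (n : ℕ) (A : Finset (Fin n → ℤ))
    (c : (Fin n → ℤ) → ℂ) (hcl : IsClosed (amoebaOf n (evalL n A c))) :
    ∀ x ∈ (amoebaOf n (evalL n A c))ᶜ,
      IsOpen (connectedComponentIn (amoebaOf n (evalL n A c))ᶜ x) ∧
      Convex ℝ (connectedComponentIn (amoebaOf n (evalL n A c))ᶜ x) := by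
  classical
  intro x hx
  have hΩopen : IsOpen (amoebaOf n (evalL n A c))ᶜ := hcl.isOpen_compl
  refine ⟨hΩopen.connectedComponentIn, ?_⟩
  set Ω : Set (Fin n → ℝ) := (amoebaOf n (evalL n A c))ᶜ with hΩ
  set E : Set (Fin n → ℝ) := connectedComponentIn Ω x with hE
  have hEopen : IsOpen E := hΩopen.connectedComponentIn
  rw [convex_iff_segment_subset]
  intro a ha b hb w hw
  rw [segment_eq_image' ℝ a b] at hw
  obtain ⟨t, ht, rfl⟩ := hw
  set w : Fin n → ℝ := a + t • (b - a) with hwdef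
  -- radii around the endpoints
  obtain ⟨εa, hεa, hballa⟩ := Metric.isOpen_iff.1 hEopen a ha
  obtain ⟨εb, hεb, hballb⟩ := Metric.isOpen_iff.1 hEopen b hb
  set ε : ℝ := min εa εb with hεdef
  have hε : 0 < ε := lt_min hεa hεb
  -- a good integer direction approximating b - a
  obtain ⟨N, r, hN0, hdist, hinj'⟩ :=
    good_direction (A.filter fun α => c α ≠ 0) (fun j => b j - a j) hε
  have hNR : (0:ℝ) < N := by exact_mod_cast hN0
  have hinj : ∀ α ∈ A, c α ≠ 0 → ∀ β ∈ A, c β ≠ 0 →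
      (∑ j, α j * r j) = (∑ j, β j * r j) → α = β := by
    intro α hα hcα β hβ hcβ hsum
    exact hinj' α (Finset.mem_filter.2 ⟨hα, hcα⟩) β (Finset.mem_filter.2 ⟨hβ, hcβ⟩) hsum
  -- set up the segment in the integer direction
  set a' : Fin n → ℝ := fun j => w j - (t / N) * (r j : ℝ) with ha'def
  have hcoord : ∀ j, |(r j : ℝ) / N - (b j - a j)| < ε := by
    intro j
    have := dist_le_pi_dist (fun j => (r j : ℝ) / (N:ℝ)) (fun j => b j - a j) j
    rw [Real.dist_eq] at this
    exact lt_of_le_of_lt this hdist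
  have ha' : a' ∈ E := by
    apply hballa
    rw [Metric.mem_ball, dist_pi_lt_iff hεa]
    intro j
    rw [Real.dist_eq]
    have h1 : a' j - a j = -(t * ((r j : ℝ) / N - (b j - a j))) := by
      rw [ha'def]
      show w j - (t / N) * (r j : ℝ) - a j = _
      have : w j = a j + t * (b j - a j) := rfl
      rw [this]
      field_simp
      ring
    rw [h1, abs_neg, abs_mul, abs_of_nonneg ht.1]
    calc t * |(r j : ℝ) / N - (b j - a j)| ≤ 1 * |(r j : ℝ) / N - (b j - a j)| := by
          apply mul_le_mul_of_nonneg_right ht.2 (abs_nonneg _)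
      _ < εa := by rw [one_mul]; exact lt_of_lt_of_le (hcoord j) (min_le_left _ _)
  have hb' : (fun j => a' j + (1/(N:ℝ)) * (r j : ℝ)) ∈ E := by
    apply hballb
    rw [Metric.mem_ball, dist_pi_lt_iff hεb]
    intro j
    rw [Real.dist_eq]
    have h1 : a' j + (1/(N:ℝ)) * (r j : ℝ) - b j
        = (1 - t) * ((r j : ℝ) / N - (b j - a j)) := by
      rw [ha'def]
      show w j - (t / N) * (r j : ℝ) + (1/(N:ℝ)) * (r j : ℝ) - b j = _
      have : w j = a j + t * (b j - a j) := rfl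
      rw [this]
      field_simp
      ring
    rw [h1, abs_mul, abs_of_nonneg (by linarith [ht.2])]
    calc (1 - t) * |(r j : ℝ) / N - (b j - a j)|
        ≤ 1 * |(r j : ℝ) / N - (b j - a j)| := by
          apply mul_le_mul_of_nonneg_right (by linarith [ht.1]) (abs_nonneg _)
      _ < εb := by rw [one_mul]; exact lt_of_lt_of_le (hcoord j) (min_le_right _ _)
  -- the whole segment lies in the amoeba complement
  have hseg : ∀ s ∈ Set.Icc (0:ℝ) (1/(N:ℝ)), (fun j => a' j + s * (r j : ℝ)) ∈ Ω := by
    intro s hs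
    exact key_segment n A c x hx r hinj a' ha' (1/(N:ℝ)) hb' s hs
  -- the segment is connected and contains a' and w
  set γ : ℝ → (Fin n → ℝ) := fun s => fun j => a' j + s * (r j : ℝ) with hγ
  have hγcont : Continuous γ := by
    apply continuous_pi
    intro j
    exact continuous_const.add (continuous_id.mul continuous_const)
  have hK : IsPreconnected (γ '' Set.Icc 0 (1/(N:ℝ))) :=
    (isPreconnected_Icc).image γ hγcont.continuousOn
  have hKΩ : γ '' Set.Icc 0 (1/(N:ℝ)) ⊆ Ω := by
    rintro _ ⟨s, hs, rfl⟩
    exact hseg s hs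
  have haK : a' ∈ γ '' Set.Icc 0 (1/(N:ℝ)) := by
    refine ⟨0, Set.mem_Icc.2 ⟨le_refl _, by positivity⟩, ?_⟩
    funext j
    simp [hγ]
  have hKE : γ '' Set.Icc 0 (1/(N:ℝ)) ⊆ E := by
    rw [hE, connectedComponentIn_eq ha']
    exact hK.subset_connectedComponentIn haK hKΩ
  apply hKE
  refine ⟨t/N, Set.mem_Icc.2 ⟨div_nonneg ht.1 hNR.le, ?_⟩, ?_⟩
  · gcongr
    exact ht.2
  · funext j
    show a' j + (t/N) * (r j : ℝ) = w j
    rw [ha'def]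
    ring
end

section
/- The complement of the amoeba of z₁ + z₂ + 1 in ℝ² has exactly three connected components. -/
open Real

/-- The amoeba of the linear polynomial z₁ + z₂ + 1. -/
def linAmoeba : Set (Fin 2 → ℝ) :=
  {v | ∃ z₁ z₂ : ℂ, z₁ ≠ 0 ∧ z₂ ≠ 0 ∧ z₁ + z₂ + 1 = 0 ∧
        v 0 = Real.log ‖z₁‖ ∧ v 1 = Real.log ‖z₂‖}

lemma mem_linAmoeba_iff (v : Fin 2 → ℝ) :
    v ∈ linAmoeba ↔
      exp (v 0) ≤ exp (v 1) + 1 ∧ exp (v 1) ≤ exp (v 0) + 1 ∧ 1 ≤ exp (v 0) + exp (v 1) := by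
  constructor
  · rintro ⟨z₁, z₂, hz₁, hz₂, hsum, h0, h1⟩
    have ha : exp (v 0) = ‖z₁‖ := by
      rw [h0, Real.exp_log (norm_pos_iff.mpr hz₁)]
    have hb : exp (v 1) = ‖z₂‖ := by
      rw [h1, Real.exp_log (norm_pos_iff.mpr hz₂)]
    have e1 : z₁ = -(z₂ + 1) := by linear_combination hsum
    have e2 : z₂ = -(z₁ + 1) := by linear_combination hsum
    have e3 : (-1 : ℂ) = z₁ + z₂ := by linear_combination -hsum
    refine ⟨?_, ?_, ?_⟩
    · calc exp (v 0) = ‖z₂ + 1‖ := by rw [ha, e1, norm_neg]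
        _ ≤ ‖z₂‖ + ‖(1:ℂ)‖ := norm_add_le _ _
        _ = exp (v 1) + 1 := by rw [hb, norm_one]
    · calc exp (v 1) = ‖z₁ + 1‖ := by rw [hb, e2, norm_neg]
        _ ≤ ‖z₁‖ + ‖(1:ℂ)‖ := norm_add_le _ _
        _ = exp (v 0) + 1 := by rw [ha, norm_one]
    · calc (1:ℝ) = ‖z₁ + z₂‖ := by rw [← e3]; simp
        _ ≤ ‖z₁‖ + ‖z₂‖ := norm_add_le _ _
        _ = exp (v 0) + exp (v 1) := by rw [ha, hb]
  · rintro ⟨h1, h2, h3⟩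
    set a := exp (v 0) with hav
    set b := exp (v 1) with hbv
    have ha : 0 < a := exp_pos _
    have hb : 0 < b := exp_pos _
    set c : ℝ := (a ^ 2 - b ^ 2 - 1) / (2 * b) with hc
    have hc2 : c ^ 2 ≤ 1 := by
      rw [hc, div_pow, div_le_one (by positivity)]
      have k1 : a ^ 2 ≤ (b + 1) ^ 2 := by nlinarith
      have k2 : (b - 1) ^ 2 ≤ a ^ 2 := by nlinarith
      nlinarith [mul_nonneg (sub_nonneg.2 k1) (sub_nonneg.2 k2)]
    set s : ℝ := Real.sqrt (1 - c ^ 2) with hs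
    have hs2 : s ^ 2 = 1 - c ^ 2 := Real.sq_sqrt (by linarith)
    have hbc : 2 * b * c = a ^ 2 - b ^ 2 - 1 := by
      rw [hc]; field_simp
    set z : ℂ := (b * c : ℝ) + (b * s : ℝ) * Complex.I with hz
    have habsz : ‖z‖ = b := by
      rw [hz, Complex.norm_add_mul_I,
        show (b * c) ^ 2 + (b * s) ^ 2 = b ^ 2 by linear_combination b ^ 2 * hs2,
        Real.sqrt_sq hb.le]
    have hone : (1 : ℂ) + z = ((1 + b * c : ℝ) : ℂ) + (b * s : ℝ) * Complex.I := by
      rw [hz]; push_cast; ring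
    have habs1 : ‖-(1 + z)‖ = a := by
      rw [norm_neg, hone, Complex.norm_add_mul_I,
        show (1 + b * c) ^ 2 + (b * s) ^ 2 = a ^ 2 by linear_combination b ^ 2 * hs2 + hbc,
        Real.sqrt_sq ha.le]
    refine ⟨-(1 + z), z, ?_, ?_, by ring, ?_, ?_⟩
    · intro h
      rw [h] at habs1; simp at habs1; linarith
    · intro h
      rw [h] at habsz; simp at habsz; linarith
    · rw [habs1, hav, Real.log_exp]
    · rw [habsz, hbv, Real.log_exp]

def regA : Set (Fin 2 → ℝ) := {v | exp (v 1) + 1 < exp (v 0)}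
def regB : Set (Fin 2 → ℝ) := {v | exp (v 0) + 1 < exp (v 1)}
def regC : Set (Fin 2 → ℝ) := {v | exp (v 0) + exp (v 1) < 1}

lemma compl_eq : linAmoebaᶜ = regA ∪ regB ∪ regC := by
  ext v
  simp only [Set.mem_compl_iff, mem_linAmoeba_iff, Set.mem_union, regA, regB, regC,
    Set.mem_setOf_eq, not_and_or, not_le]
  tauto

lemma isOpen_regA : IsOpen regA :=
  isOpen_lt (((continuous_apply 1).rexp).add continuous_const) ((continuous_apply 0).rexp)

lemma isOpen_regB : IsOpen regB :=
  isOpen_lt (((continuous_apply 0).rexp).add continuous_const) ((continuous_apply 1).rexp)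

lemma isOpen_regC : IsOpen regC :=
  isOpen_lt (((continuous_apply 0).rexp).add ((continuous_apply 1).rexp)) continuous_const

lemma isPreconnected_regA : IsPreconnected regA := by
  have himg : regA = (fun p : ℝ × ℝ => ![Real.log (exp p.2 + 1 + exp p.1), p.2]) '' Set.univ := by
    ext v
    constructor
    · intro hv
      refine ⟨(Real.log (exp (v 0) - exp (v 1) - 1), v 1), trivial, ?_⟩
      have hpos : (0:ℝ) < exp (v 0) - exp (v 1) - 1 := by
        have := hv; simp only [regA, Set.mem_setOf_eq] at this; linarith
      funext i
      fin_cases i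
      · simp only [Real.exp_log hpos]
        rw [show exp (v 1) + 1 + (exp (v 0) - exp (v 1) - 1) = exp (v 0) by ring, Real.log_exp]
        simp
      · simp
    · rintro ⟨p, -, rfl⟩
      simp only [regA, Set.mem_setOf_eq, Matrix.cons_val_one, Matrix.head_cons,
        Matrix.cons_val_zero]
      rw [Real.exp_log (by positivity)]
      have := exp_pos p.1; linarith
  have hc : Continuous (fun p : ℝ × ℝ => ![Real.log (exp p.2 + 1 + exp p.1), p.2]) := by
    apply continuous_pi
    intro i
    fin_cases i
    · simpa using ((continuous_snd.rexp.add continuous_const).add continuous_fst.rexp).log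
        (fun p => by simp only [Pi.add_apply]; positivity)
    · simpa using continuous_snd
  rw [himg]
  exact isPreconnected_univ.image _ hc.continuousOn

lemma isPreconnected_regB : IsPreconnected regB := by
  have himg : regB = (fun p : ℝ × ℝ => ![p.2, Real.log (exp p.2 + 1 + exp p.1)]) '' Set.univ := by
    ext v
    constructor
    · intro hv
      refine ⟨(Real.log (exp (v 1) - exp (v 0) - 1), v 0), trivial, ?_⟩
      have hpos : (0:ℝ) < exp (v 1) - exp (v 0) - 1 := by
        have := hv; simp only [regB, Set.mem_setOf_eq] at this; linarith
      funext i
      fin_cases i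
      · simp
      · simp only [Real.exp_log hpos]
        rw [show exp (v 0) + 1 + (exp (v 1) - exp (v 0) - 1) = exp (v 1) by ring, Real.log_exp]
        simp
    · rintro ⟨p, -, rfl⟩
      simp only [regB, Set.mem_setOf_eq, Matrix.cons_val_one, Matrix.head_cons,
        Matrix.cons_val_zero]
      rw [Real.exp_log (by positivity)]
      have := exp_pos p.1; linarith
  have hc : Continuous (fun p : ℝ × ℝ => ![p.2, Real.log (exp p.2 + 1 + exp p.1)]) := by
    apply continuous_pi
    intro i
    fin_cases i
    · simpa using continuous_snd
    · simpa using ((continuous_snd.rexp.add continuous_const).add continuous_fst.rexp).log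
        (fun p => by simp only [Pi.add_apply]; positivity)
  rw [himg]
  exact isPreconnected_univ.image _ hc.continuousOn

lemma isPreconnected_regC : IsPreconnected regC := by
  have himg : regC = (fun p : ℝ × ℝ =>
      ![p.1 - Real.log (exp p.1 + exp p.2 + 1), p.2 - Real.log (exp p.1 + exp p.2 + 1)]) ''
      Set.univ := by
    ext v
    constructor
    · intro hv
      have hpos : (0:ℝ) < 1 - exp (v 0) - exp (v 1) := by
        have := hv; simp only [regC, Set.mem_setOf_eq] at this; linarith
      set w : ℝ := 1 - exp (v 0) - exp (v 1) with hw
      refine ⟨(v 0 - Real.log w, v 1 - Real.log w), trivial, ?_⟩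
      have hD : exp (v 0 - Real.log w) + exp (v 1 - Real.log w) + 1 = 1 / w := by
        rw [Real.exp_sub, Real.exp_sub, Real.exp_log hpos]
        field_simp
        ring
      funext i
      fin_cases i
      · simp only [Matrix.cons_val_zero, hD]
        rw [Real.log_div one_ne_zero (ne_of_gt hpos), Real.log_one]
        ring_nf
        simp
      · simp only [Matrix.cons_val_one, Matrix.head_cons, hD]
        rw [Real.log_div one_ne_zero (ne_of_gt hpos), Real.log_one]
        ring_nf
        simp
    · rintro ⟨p, -, rfl⟩
      simp only [regC, Set.mem_setOf_eq, Matrix.cons_val_one, Matrix.head_cons,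
        Matrix.cons_val_zero]
      rw [Real.exp_sub, Real.exp_sub, Real.exp_log (by positivity)]
      rw [← add_div, div_lt_one (by positivity)]
      linarith
  have hc : Continuous (fun p : ℝ × ℝ =>
      ![p.1 - Real.log (exp p.1 + exp p.2 + 1), p.2 - Real.log (exp p.1 + exp p.2 + 1)]) := by
    have hlog : Continuous (fun p : ℝ × ℝ => Real.log (exp p.1 + exp p.2 + 1)) :=
      ((continuous_fst.rexp.add continuous_snd.rexp).add continuous_const).log
        (fun p => by simp only [Pi.add_apply]; positivity)
    apply continuous_pi
    intro i
    fin_cases i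
    · simp
      exact continuous_fst.sub hlog
    · simp
      exact continuous_snd.sub hlog
  rw [himg]
  exact isPreconnected_univ.image _ hc.continuousOn

lemma disj_AB : Disjoint regA regB := by
  rw [Set.disjoint_left]
  intro v ha hb
  simp only [regA, regB, Set.mem_setOf_eq] at ha hb
  linarith

lemma disj_AC : Disjoint regA regC := by
  rw [Set.disjoint_left]
  intro v ha hc
  simp only [regA, regC, Set.mem_setOf_eq] at ha hc
  have := exp_pos (v 1); linarith

lemma disj_BC : Disjoint regB regC := by
  rw [Set.disjoint_left]
  intro v hb hc
  simp only [regB, regC, Set.mem_setOf_eq] at hb hc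
  have := exp_pos (v 0); linarith

lemma cc_eq {U V : Set (Fin 2 → ℝ)} (hU : IsOpen U) (hV : IsOpen V) (hd : Disjoint U V)
    (hUc : IsPreconnected U) {x : Fin 2 → ℝ} (hx : x ∈ U) :
    connectedComponentIn (U ∪ V) x = U := by
  apply subset_antisymm
  · exact IsPreconnected.subset_left_of_subset_union hU hV hd
      (connectedComponentIn_subset _ _)
      ⟨x, mem_connectedComponentIn (Set.mem_union_left _ hx), hx⟩
      (isPreconnected_connectedComponentIn)
  · exact hUc.subset_connectedComponentIn hx Set.subset_union_left

lemma cc_A {x : Fin 2 → ℝ} (hx : x ∈ regA) : connectedComponentIn linAmoebaᶜ x = regA := by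
  rw [compl_eq, Set.union_assoc]
  exact cc_eq isOpen_regA (isOpen_regB.union isOpen_regC)
    (Set.disjoint_union_right.2 ⟨disj_AB, disj_AC⟩) isPreconnected_regA hx

lemma cc_B {x : Fin 2 → ℝ} (hx : x ∈ regB) : connectedComponentIn linAmoebaᶜ x = regB := by
  rw [compl_eq, show regA ∪ regB ∪ regC = regB ∪ (regA ∪ regC) by
    rw [Set.union_assoc, Set.union_comm regB, ← Set.union_assoc, Set.union_comm (regA ∪ regC)]]
  exact cc_eq isOpen_regB (isOpen_regA.union isOpen_regC)
    (Set.disjoint_union_right.2 ⟨disj_AB.symm, disj_BC⟩) isPreconnected_regB hx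

lemma cc_C {x : Fin 2 → ℝ} (hx : x ∈ regC) : connectedComponentIn linAmoebaᶜ x = regC := by
  rw [compl_eq, show regA ∪ regB ∪ regC = regC ∪ (regA ∪ regB) by
    rw [Set.union_comm]]
  exact cc_eq isOpen_regC (isOpen_regA.union isOpen_regB)
    (Set.disjoint_union_right.2 ⟨disj_AC.symm, disj_BC.symm⟩) isPreconnected_regC hx

lemma memA : ![Real.log 3, 0] ∈ regA := by
  simp only [regA, Set.mem_setOf_eq, Matrix.cons_val_one, Matrix.head_cons, Matrix.cons_val_zero]
  rw [Real.exp_zero, Real.exp_log (by norm_num)]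
  norm_num

lemma memB : ![(0:ℝ), Real.log 3] ∈ regB := by
  simp only [regB, Set.mem_setOf_eq, Matrix.cons_val_one, Matrix.head_cons, Matrix.cons_val_zero]
  rw [Real.exp_zero, Real.exp_log (by norm_num)]
  norm_num

lemma memC : ![Real.log (1/4), Real.log (1/4)] ∈ regC := by
  simp only [regC, Set.mem_setOf_eq, Matrix.cons_val_one, Matrix.head_cons, Matrix.cons_val_zero]
  rw [Real.exp_log (by norm_num)]
  norm_num

/-- The complement of the amoeba of z₁ + z₂ + 1 in ℝ² has exactly three
connected components. -/
theorem linAmoeba_compl_three_components :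
    {C : Set (Fin 2 → ℝ) | ∃ x ∈ linAmoebaᶜ,
        C = connectedComponentIn linAmoebaᶜ x}.ncard = 3 := by
  have hset : {C : Set (Fin 2 → ℝ) | ∃ x ∈ linAmoebaᶜ,
      C = connectedComponentIn linAmoebaᶜ x} = {regA, regB, regC} := by
    ext C
    simp only [Set.mem_setOf_eq, Set.mem_insert_iff, Set.mem_singleton_iff]
    constructor
    · rintro ⟨x, hx, rfl⟩
      rw [compl_eq] at hx
      rcases hx with (h | h) | h
      · exact Or.inl (cc_A h)
      · exact Or.inr (Or.inl (cc_B h))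
      · exact Or.inr (Or.inr (cc_C h))
    · rintro (rfl | rfl | rfl)
      · exact ⟨_, by rw [compl_eq]; exact Or.inl (Or.inl memA), (cc_A memA).symm⟩
      · exact ⟨_, by rw [compl_eq]; exact Or.inl (Or.inr memB), (cc_B memB).symm⟩
      · exact ⟨_, by rw [compl_eq]; exact Or.inr memC, (cc_C memC).symm⟩
  rw [hset]
  refine Set.ncard_eq_three.mpr ⟨regA, regB, regC, ?_, ?_, ?_, rfl⟩
  · intro h
    exact Set.disjoint_left.1 disj_AB memA (h ▸ memA)
  · intro h
    exact Set.disjoint_left.1 disj_AC memA (h ▸ memA)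
  · intro h
    exact Set.disjoint_left.1 disj_BC memB (h ▸ memB)
end
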